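/- Suppose A₁, …, A_ℓ is a sequence of distinct strictly k-balanced k-uniform hypergraphs, all with the same k-density ρ, forming a self-avoiding cyclic walk (i.e., there exist distinct edges e₁, …, e_ℓ with e_i ∈ A_i ∩ A_{i+1} for all i, indices modulo ℓ), such that no proper subsequence forms a self-avoiding cyclic walk. Let S := A₁ + … + A_ℓ. Then there exists an edge e ∈ S with ρ_{S,e} > ρ. -/

import Mathlib

open Finset

/-- The vertex set (support) of a hypergraph given by its edge set. -/
def verts (A : Finset (Finset ℕ)) : Finset ℕ := A.sup id

/-- The edge set of the induced subhypergraph `A[U]`. -/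
def ind (A : Finset (Finset ℕ)) (U : Finset ℕ) : Finset (Finset ℕ) := A.filter (· ⊆ U)

/-- The density of the template `(A[U], I)`, where `A[U]` carries the vertex set `U`:
`(e(A[U]) - e(A[I])) / (|U| - |I|)`, and `0` if `U = I`. -/
def dens (A : Finset (Finset ℕ)) (U I : Finset ℕ) : ℚ :=
  if U = I then 0
  else (((ind A U).card : ℚ) - ((ind A I).card : ℚ)) / ((U.card : ℚ) - (I.card : ℚ))

/-- The density `ρ_{A,I}` of the template `(A, I)` (whose vertex set is `verts A ∪ I`). -/
def tdens (A : Finset (Finset ℕ)) (I : Finset ℕ) : ℚ := dens A (verts A ∪ I) I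

/-- The `k`-density `ρ_A = (e(A) - 1)/(v(A) - k)` of a `k`-uniform hypergraph. -/
def kdens (k : ℕ) (A : Finset (Finset ℕ)) : ℚ :=
  ((A.card : ℚ) - 1) / (((verts A).card : ℚ) - (k : ℚ))

/-- The template `(A, I)` is strictly balanced: every proper subtemplate `(B, I) ⊆ (A, I)`
(`B = A[U]` with vertex set `U`, `I ⊆ U`, `V(B) = U ≠ I`, `B ≠ A`) has strictly smaller
density. -/
def StrictBalT (A : Finset (Finset ℕ)) (I : Finset ℕ) : Prop :=
  ∀ U : Finset ℕ, I ⊆ U → U ⊂ verts A ∪ I → U ≠ I → dens A U I < tdens A I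

/-- `A 0, …, A (n-1)` is a self-avoiding cyclic walk: the hypergraphs are distinct and there
are distinct edges `e 0, …, e (n-1)` with `e i ∈ A i ∩ A ((i+1) % n)` for all `i < n`. -/
def IsSACW (n : ℕ) (A : ℕ → Finset (Finset ℕ)) : Prop :=
  2 ≤ n ∧ (∀ i < n, ∀ j < n, A i = A j → i = j) ∧
    ∃ e : ℕ → Finset ℕ,
      (∀ i < n, ∀ j < n, e i = e j → i = j) ∧
      ∀ i < n, e i ∈ A i ∧ e i ∈ A ((i + 1) % n)

/-- `A` is strictly `k`-balanced: it has at least three edges and every proper subgraph with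
at least two edges has strictly smaller `k`-density. -/
def StrictlyKBalanced (k : ℕ) (A : Finset (Finset ℕ)) : Prop :=
  3 ≤ A.card ∧ ∀ G ⊂ A, 2 ≤ G.card → kdens k G < kdens k A

lemma subset_verts {A : Finset (Finset ℕ)} {e : Finset ℕ} (he : e ∈ A) : e ⊆ verts A :=
  Finset.le_sup (f := id) he

lemma verts_mono {A B : Finset (Finset ℕ)} (h : A ⊆ B) : verts A ⊆ verts B := by
  have := Finset.sup_mono (f := id) h; exact this

lemma verts_union (A B : Finset (Finset ℕ)) : verts (A ∪ B) = verts A ∪ verts B :=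
  Finset.sup_union

lemma verts_card_ge {k : ℕ} {A : Finset (Finset ℕ)} (h2 : 2 ≤ A.card)
    (hu : ∀ e ∈ A, e.card = k) : k + 1 ≤ (verts A).card := by
  obtain ⟨a, ha, b, hb, hab⟩ := Finset.one_lt_card.mp (lt_of_lt_of_le one_lt_two h2)
  have hna : ¬ b ⊆ a := fun hs =>
    hab ((Finset.eq_of_subset_of_card_le hs (by rw [hu a ha, hu b hb])).symm)
  obtain ⟨x, hxb, hxa⟩ := Finset.not_subset.mp hna
  have hins : insert x a ⊆ verts A := by
    intro y hy
    rcases Finset.mem_insert.mp hy with h | h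
    · exact subset_verts hb (h ▸ hxb)
    · exact subset_verts ha h
  calc k + 1 = (insert x a).card := by rw [Finset.card_insert_of_notMem hxa, hu a ha]
    _ ≤ _ := Finset.card_le_card hins

lemma key_lt {k : ℕ} {ρ : ℚ} (hρ : 0 ≤ ρ) {B T : Finset (Finset ℕ)}
    (hBd : (B.card : ℚ) - 1 = ρ * (((verts B).card : ℚ) - k))
    (hbal : ∀ G ⊂ B, 2 ≤ G.card → (G.card : ℚ) - 1 < ρ * (((verts G).card : ℚ) - k))
    (hD2 : 2 ≤ (B ∩ T).card) (hns : ¬ B ⊆ T) :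
    ((B ∩ T).card : ℚ) - 1 < ρ * (((verts B ∩ verts T).card : ℚ) - k) := by
  set W : Finset ℕ := verts B ∩ verts T with hW
  set D : Finset (Finset ℕ) := B ∩ T with hDdef
  set G : Finset (Finset ℕ) := B.filter (· ⊆ W) with hGdef
  have hDG : D ⊆ G := by
    intro d hd
    have hdB : d ∈ B := (Finset.mem_inter.mp hd).1
    have hdT : d ∈ T := (Finset.mem_inter.mp hd).2
    refine Finset.mem_filter.mpr ⟨hdB, ?_⟩
    exact Finset.subset_inter (subset_verts hdB) (subset_verts hdT)
  have hGW : verts G ⊆ W := by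
    show G.sup id ≤ W
    apply Finset.sup_le
    intro g hg
    exact (Finset.mem_filter.mp hg).2
  by_cases hGB : G = B
  · have hWB : W = verts B :=
      Finset.Subset.antisymm Finset.inter_subset_left (by rw [← hGB]; exact hGW)
    rw [hWB, ← hBd]
    have hDB : D ⊂ B := by
      refine Finset.ssubset_iff_subset_ne.mpr ⟨Finset.inter_subset_left, ?_⟩
      intro h
      exact hns (by rw [← h]; exact Finset.inter_subset_right)
    have := Finset.card_lt_card hDB
    have : (D.card : ℚ) < B.card := by exact_mod_cast this
    linarith
  · have hG : G ⊂ B := Finset.ssubset_iff_subset_ne.mpr ⟨Finset.filter_subset _ _, hGB⟩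
    have h2G : 2 ≤ G.card := le_trans hD2 (Finset.card_le_card hDG)
    have h1 := hbal G hG h2G
    have h2 : (G.card : ℚ) ≥ D.card := by exact_mod_cast Finset.card_le_card hDG
    have h3 : ((verts G).card : ℚ) ≤ W.card := by exact_mod_cast Finset.card_le_card hGW
    have h4 : ρ * (((verts G).card : ℚ) - k) ≤ ρ * ((W.card : ℚ) - k) := by
      apply mul_le_mul_of_nonneg_left _ hρ
      linarith
    linarith

lemma key_le {k : ℕ} {ρ : ℚ} (hρ : 0 ≤ ρ) {B T : Finset (Finset ℕ)}
    (hu : ∀ e ∈ B, e.card = k)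
    (hBd : (B.card : ℚ) - 1 = ρ * (((verts B).card : ℚ) - k))
    (hbal : ∀ G ⊂ B, 2 ≤ G.card → (G.card : ℚ) - 1 < ρ * (((verts G).card : ℚ) - k))
    (hD : (B ∩ T).Nonempty) :
    ((B ∩ T).card : ℚ) - 1 ≤ ρ * (((verts B ∩ verts T).card : ℚ) - k) := by
  by_cases hns : B ⊆ T
  · have hDB : B ∩ T = B := Finset.inter_eq_left.mpr hns
    have hWB : verts B ∩ verts T = verts B := Finset.inter_eq_left.mpr (verts_mono hns)
    rw [hDB, hWB]
    exact le_of_eq hBd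
  · by_cases h2 : 2 ≤ (B ∩ T).card
    · exact le_of_lt (key_lt hρ hBd hbal h2 hns)
    · have h1 : (B ∩ T).card = 1 := by
        have := Finset.card_pos.mpr hD; omega
      obtain ⟨d, hd⟩ := hD
      have hdB : d ∈ B := (Finset.mem_inter.mp hd).1
      have hdT : d ∈ T := (Finset.mem_inter.mp hd).2
      have hdW : d ⊆ verts B ∩ verts T :=
        Finset.subset_inter (subset_verts hdB) (subset_verts hdT)
      have hkW : k ≤ (verts B ∩ verts T).card := by
        rw [← hu d hdB]; exact Finset.card_le_card hdW
      have : (0:ℚ) ≤ ρ * (((verts B ∩ verts T).card : ℚ) - k) := by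
        apply mul_nonneg hρ
        have : (k:ℚ) ≤ ((verts B ∩ verts T).card : ℚ) := by exact_mod_cast hkW
        linarith
      rw [h1]
      push_cast
      linarith

lemma glue_le {k : ℕ} {ρ : ℚ} {B T : Finset (Finset ℕ)}
    (hT : ρ * (((verts T).card : ℚ) - k) ≤ (T.card : ℚ) - 1)
    (hBd : (B.card : ℚ) - 1 = ρ * (((verts B).card : ℚ) - k))
    (hkey : ((B ∩ T).card : ℚ) - 1 ≤ ρ * (((verts B ∩ verts T).card : ℚ) - k)) :
    ρ * (((verts (T ∪ B)).card : ℚ) - k) ≤ ((T ∪ B).card : ℚ) - 1 := by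
  have h1 : ((T ∪ B).card : ℚ) + ((B ∩ T).card : ℚ) = (T.card : ℚ) + B.card := by
    rw [Finset.inter_comm]
    exact_mod_cast congrArg (Nat.cast (R := ℚ)) (Finset.card_union_add_card_inter T B)
  have h2 : verts (T ∪ B) = verts T ∪ verts B := verts_union T B
  have h3 : ((verts T ∪ verts B).card : ℚ) + ((verts B ∩ verts T).card : ℚ)
      = ((verts T).card : ℚ) + (verts B).card := by
    rw [Finset.inter_comm]
    exact_mod_cast congrArg (Nat.cast (R := ℚ))
      (Finset.card_union_add_card_inter (verts T) (verts B))
  rw [h2]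
  have hu : ((verts T ∪ verts B).card : ℚ)
      = ((verts T).card : ℚ) + (verts B).card - (verts B ∩ verts T).card := by linarith
  have hc : ((T ∪ B).card : ℚ) = (T.card : ℚ) + B.card - (B ∩ T).card := by linarith
  rw [hu, hc]
  have hr : ρ * (((verts T).card : ℚ) + (verts B).card - (verts B ∩ verts T).card - k)
      = ρ * (((verts T).card : ℚ) - k) + ρ * (((verts B).card : ℚ) - k)
        - ρ * (((verts B ∩ verts T).card : ℚ) - k) := by ring
  rw [hr]
  linarith

lemma glue_lt {k : ℕ} {ρ : ℚ} {B T : Finset (Finset ℕ)}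
    (hT : ρ * (((verts T).card : ℚ) - k) ≤ (T.card : ℚ) - 1)
    (hBd : (B.card : ℚ) - 1 = ρ * (((verts B).card : ℚ) - k))
    (hkey : ((B ∩ T).card : ℚ) - 1 < ρ * (((verts B ∩ verts T).card : ℚ) - k)) :
    ρ * (((verts (T ∪ B)).card : ℚ) - k) < ((T ∪ B).card : ℚ) - 1 := by
  have h1 : ((T ∪ B).card : ℚ) + ((B ∩ T).card : ℚ) = (T.card : ℚ) + B.card := by
    rw [Finset.inter_comm]
    exact_mod_cast congrArg (Nat.cast (R := ℚ)) (Finset.card_union_add_card_inter T B)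
  have h2 : verts (T ∪ B) = verts T ∪ verts B := verts_union T B
  have h3 : ((verts T ∪ verts B).card : ℚ) + ((verts B ∩ verts T).card : ℚ)
      = ((verts T).card : ℚ) + (verts B).card := by
    rw [Finset.inter_comm]
    exact_mod_cast congrArg (Nat.cast (R := ℚ))
      (Finset.card_union_add_card_inter (verts T) (verts B))
  rw [h2]
  have hu : ((verts T ∪ verts B).card : ℚ)
      = ((verts T).card : ℚ) + (verts B).card - (verts B ∩ verts T).card := by linarith
  have hc : ((T ∪ B).card : ℚ) = (T.card : ℚ) + B.card - (B ∩ T).card := by linarith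
  rw [hu, hc]
  have hr : ρ * (((verts T).card : ℚ) + (verts B).card - (verts B ∩ verts T).card - k)
      = ρ * (((verts T).card : ℚ) - k) + ρ * (((verts B).card : ℚ) - k)
        - ρ * (((verts B ∩ verts T).card : ℚ) - k) := by ring
  rw [hr]
  linarith

lemma subwalk_contra {n : ℕ} {A : ℕ → Finset (Finset ℕ)} {e : ℕ → Finset ℕ}
    (hAinj : ∀ i < n, ∀ j < n, A i = A j → i = j)
    (heinj : ∀ i < n, ∀ j < n, e i = e j → i = j)
    (hew : ∀ i < n, e i ∈ A i ∧ e i ∈ A ((i + 1) % n))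
    (hmin : ∀ (m : ℕ) (g : ℕ → ℕ), m < n → (∀ i < m, g i < n) →
      (∀ i j, i < j → j < m → g i < g j) → ¬ IsSACW m (fun i => A (g i)))
    {f : Finset ℕ} {j₀ : ℕ} (hj₀1 : 1 ≤ j₀) (hj₀2 : j₀ ≤ n - 2) (hn : 2 ≤ n)
    (hf1 : f ∈ A j₀) (hf2 : f ∈ A (n - 1))
    (hfe : ∀ i, j₀ ≤ i → i ≤ n - 2 → f ≠ e i) : False := by
  set L := n - j₀ with hL
  refine hmin L (fun i => j₀ + i) (by omega) (fun i hi => show j₀ + i < n by omega)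
    (fun i j hij hj => show j₀ + i < j₀ + j by omega) ⟨by omega, ?_, ?_⟩
  · intro i hi j hj hA
    have := hAinj (j₀ + i) (by omega) (j₀ + j) (by omega) hA
    omega
  · refine ⟨fun i => if i = L - 1 then f else e (j₀ + i), ?_, ?_⟩
    · intro i hi j hj hij
      change (if i = L - 1 then f else e (j₀ + i)) = (if j = L - 1 then f else e (j₀ + j)) at hij
      split_ifs at hij with h1 h2 h2
      · omega
      · exact absurd hij (hfe (j₀ + j) (by omega) (by omega))
      · exact absurd hij.symm (hfe (j₀ + i) (by omega) (by omega))
      · have := heinj (j₀ + i) (by omega) (j₀ + j) (by omega) hij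
        omega
    · intro i hi
      constructor
      · show (if i = L - 1 then f else e (j₀ + i)) ∈ A (j₀ + i)
        by_cases h1 : i = L - 1
        · rw [if_pos h1]
          have ha : j₀ + i = n - 1 := by omega
          rw [ha]; exact hf2
        · rw [if_neg h1]
          exact (hew (j₀ + i) (by omega)).1
      · show (if i = L - 1 then f else e (j₀ + i)) ∈ A (j₀ + (i + 1) % L)
        by_cases h1 : i = L - 1
        · rw [if_pos h1]
          have hb : (i + 1) % L = 0 := by
            have h : i + 1 = L := by omega
            simp [h]
          rw [hb]; exact hf1
        · rw [if_neg h1]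
          have hb : (i + 1) % L = i + 1 := Nat.mod_eq_of_lt (by omega)
          have hlt : j₀ + i + 1 < n := by omega
          have h2 := (hew (j₀ + i) (by omega)).2
          rw [Nat.mod_eq_of_lt hlt] at h2
          rw [hb, show j₀ + (i + 1) = j₀ + i + 1 from by omega]
          exact h2

/-- if distinct strictly `k`-balanced `k`-graphs `A 0, …, A (n-1)`, all of
`k`-density `ρ`, form a self-avoiding cyclic walk none of whose proper subsequences forms a
self-avoiding cyclic walk, then their union `S` has an edge `e` with `ρ_{S,e} > ρ`. -/
theorem minimal_cyclic_walk_dense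
    (k : ℕ) (hk : 2 ≤ k) (ρ : ℚ) (n : ℕ)
    (A : ℕ → Finset (Finset ℕ))
    (hunif : ∀ i < n, ∀ e ∈ A i, e.card = k)
    (hsb : ∀ i < n, StrictlyKBalanced k (A i))
    (hd : ∀ i < n, kdens k (A i) = ρ)
    (hwalk : IsSACW n A)
    (hmin : ∀ (m : ℕ) (g : ℕ → ℕ), m < n → (∀ i < m, g i < n) →
      (∀ i j, i < j → j < m → g i < g j) → ¬ IsSACW m (fun i => A (g i)))
    (S : Finset (Finset ℕ)) (hS : S = (Finset.range n).biUnion A) :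
    ∃ e ∈ S, ρ < ((S.card : ℚ) - 1) / (((verts S).card : ℚ) - (k : ℚ)) := by
  obtain ⟨hn2, hAinj, e, heinj, hew⟩ := hwalk
  have hcard3 : ∀ i < n, 3 ≤ (A i).card := fun i hi => (hsb i hi).1
  have hv : ∀ i < n, k + 1 ≤ (verts (A i)).card := fun i hi =>
    verts_card_ge (by have := hcard3 i hi; omega) (hunif i hi)
  have hvpos : ∀ i < n, (0:ℚ) < ((verts (A i)).card : ℚ) - k := by
    intro i hi
    have h := hv i hi
    have : (k:ℚ) + 1 ≤ ((verts (A i)).card : ℚ) := by exact_mod_cast h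
    linarith
  have hAdens : ∀ i < n, ((A i).card : ℚ) - 1 = ρ * (((verts (A i)).card : ℚ) - k) := by
    intro i hi
    have h := hd i hi
    unfold kdens at h
    rw [div_eq_iff (ne_of_gt (hvpos i hi))] at h
    exact h
  have hρ : 0 < ρ := by
    have h := hAdens 0 (by omega)
    have h3 := hcard3 0 (by omega)
    have h3' : (3:ℚ) ≤ ((A 0).card : ℚ) := by exact_mod_cast h3
    have hp := hvpos 0 (by omega)
    rcases lt_or_ge 0 ρ with hh | hh
    · exact hh
    · exfalso
      have := mul_nonpos_of_nonpos_of_nonneg hh (le_of_lt hp)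
      linarith
  have hbal : ∀ i < n, ∀ G ⊂ A i, 2 ≤ G.card →
      (G.card : ℚ) - 1 < ρ * (((verts G).card : ℚ) - k) := by
    intro i hi G hG h2
    have h := (hsb i hi).2 G hG h2
    rw [hd i hi] at h
    have hvG : k + 1 ≤ (verts G).card :=
      verts_card_ge h2 (fun x hx => hunif i hi x (hG.subset hx))
    have hvG' : (0:ℚ) < ((verts G).card : ℚ) - k := by
      have : (k:ℚ) + 1 ≤ ((verts G).card : ℚ) := by exact_mod_cast hvG
      linarith
    unfold kdens at h
    rw [div_lt_iff₀ hvG'] at h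
    linarith
  set T : ℕ → Finset (Finset ℕ) := fun j => (Finset.range j).biUnion A with hTdef
  have hTsub : ∀ i j, i < j → A i ⊆ T j := by
    intro i j hij x hx
    exact Finset.mem_biUnion.mpr ⟨i, Finset.mem_range.mpr hij, hx⟩
  have hT1 : T 1 = A 0 := by
    simp [hTdef]
  have hTstep : ∀ j, T (j + 1) = T j ∪ A j := by
    intro j
    simp [hTdef, Finset.range_add_one, Finset.biUnion_insert, Finset.union_comm]
  have heA : ∀ i, i + 1 < n → e i ∈ A (i + 1) := by
    intro i hi
    have h := (hew i (by omega)).2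
    rwa [Nat.mod_eq_of_lt hi] at h
  have hind : ∀ j, 1 ≤ j → j ≤ n - 1 →
      ρ * (((verts (T j)).card : ℚ) - k) ≤ ((T j).card : ℚ) - 1 := by
    intro j
    induction j with
    | zero => omega
    | succ m ih =>
      intro _ hle
      by_cases hm : m = 0
      · subst hm
        rw [hT1]
        exact le_of_eq (hAdens 0 (by omega)).symm
      · have ihm := ih (by omega) (by omega)
        rw [hTstep m]
        refine glue_le ihm (hAdens m (by omega)) ?_
        refine key_le (le_of_lt hρ) (hunif m (by omega)) (hAdens m (by omega))
          (hbal m (by omega)) ⟨e (m - 1), Finset.mem_inter.mpr ⟨?_, ?_⟩⟩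
        · have h := heA (m - 1) (by omega)
          rwa [show m - 1 + 1 = m from by omega] at h
        · exact hTsub (m - 1) m (by omega) ((hew (m - 1) (by omega)).1)
  have hnsub : ¬ A (n - 1) ⊆ T (n - 1) := by
    intro hsub
    by_cases hncase : n = 2
    · subst hncase
      rw [hT1] at hsub
      have hne : A 1 ≠ A 0 := fun h => by
        have := hAinj 1 (by omega) 0 (by omega) h; omega
      have hlt := (hsb 0 (by omega)).2 (A 1)
        (Finset.ssubset_iff_subset_ne.mpr ⟨hsub, hne⟩)
        (by have := hcard3 1 (by omega); omega)
      rw [hd 0 (by omega), hd 1 (by omega)] at hlt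
      exact lt_irrefl _ hlt
    · have hn3 : 3 ≤ n := by omega
      have hsd : (A (n - 1) \ {e (n - 2), e (n - 1)}).Nonempty := by
        apply Finset.card_pos.mp
        have h1 := Finset.card_le_card_sdiff_add_card (s := A (n - 1))
          (t := ({e (n - 2), e (n - 1)} : Finset (Finset ℕ)))
        have h2 : ({e (n - 2), e (n - 1)} : Finset (Finset ℕ)).card ≤ 2 :=
          le_trans (Finset.card_insert_le _ _) (by simp)
        have h3 := hcard3 (n - 1) (by omega)
        omega
      obtain ⟨f, hf⟩ := hsd
      have hfA : f ∈ A (n - 1) := (Finset.mem_sdiff.mp hf).1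
      have hfne : f ≠ e (n - 2) ∧ f ≠ e (n - 1) := by
        have := (Finset.mem_sdiff.mp hf).2
        simp only [Finset.mem_insert, Finset.mem_singleton] at this
        tauto
      have hfT : f ∈ T (n - 1) := hsub hfA
      obtain ⟨j, hjr, hfj⟩ := Finset.mem_biUnion.mp hfT
      have hjn : j < n - 1 := Finset.mem_range.mp hjr
      by_cases hfecase : ∃ m, m < n ∧ f = e m
      · obtain ⟨m, hm, hfm⟩ := hfecase
        have hm2 : m ≠ n - 2 := fun h => hfne.1 (h ▸ hfm)
        have hm1 : m ≠ n - 1 := fun h => hfne.2 (h ▸ hfm)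
        refine subwalk_contra hAinj heinj hew hmin (f := f) (j₀ := m + 1)
          (by omega) (by omega) hn2 ?_ hfA ?_
        · rw [hfm]; exact heA m (by omega)
        · intro i hi1 hi2 hcon
          have : e m = e i := hfm ▸ hcon
          have := heinj m (by omega) i (by omega) this
          omega
      · push_neg at hfecase
        by_cases hj0 : j = 0
        · subst hj0
          refine hmin 2 (fun i => if i = 0 then 0 else n - 1) (by omega)
            (fun i hi => by split_ifs <;> omega)
            (fun i j hij hj => by
              have hi0 : i = 0 := by omega
              have hj1 : j = 1 := by omega
              subst hi0; subst hj1
              show (if (0:ℕ) = 0 then 0 else n - 1) < (if (1:ℕ) = 0 then 0 else n - 1)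
              norm_num; omega)
            ⟨le_refl 2, ?_, ?_⟩
          · intro i hi j' hj' hA2
            have hc : (i = 0 ∧ j' = 0) ∨ (i = 0 ∧ j' = 1) ∨ (i = 1 ∧ j' = 0) ∨
                (i = 1 ∧ j' = 1) := by omega
            rcases hc with ⟨h1, h2⟩ | ⟨h1, h2⟩ | ⟨h1, h2⟩ | ⟨h1, h2⟩ <;>
              subst h1 <;> subst h2
            · rfl
            · exfalso
              simp only [] at hA2
              norm_num at hA2
              have := hAinj 0 (by omega) (n - 1) (by omega) hA2
              omega
            · exfalso
              simp only [] at hA2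
              norm_num at hA2
              have := hAinj (n - 1) (by omega) 0 (by omega) hA2
              omega
            · rfl
          · refine ⟨fun i => if i = 0 then f else e (n - 1), ?_, ?_⟩
            · intro i hi j' hj' hij
              change (if i = 0 then f else e (n - 1)) = (if j' = 0 then f else e (n - 1)) at hij
              split_ifs at hij with h1 h2 h2
              · omega
              · exact absurd hij (hfecase (n - 1) (by omega))
              · exact absurd hij.symm (hfecase (n - 1) (by omega))
              · omega
            · intro i hi
              have hc : i = 0 ∨ i = 1 := by omega
              rcases hc with h1 | h1 <;> subst h1
              · constructor
                · show (if (0:ℕ) = 0 then f else e (n - 1)) ∈ A (if (0:ℕ) = 0 then 0 else n - 1)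
                  norm_num; exact hfj
                · show (if (0:ℕ) = 0 then f else e (n - 1)) ∈ A (if (0 + 1) % 2 = 0 then 0 else n - 1)
                  norm_num; exact hfA
              · constructor
                · show (if (1:ℕ) = 0 then f else e (n - 1)) ∈ A (if (1:ℕ) = 0 then 0 else n - 1)
                  norm_num; exact (hew (n - 1) (by omega)).1
                · show (if (1:ℕ) = 0 then f else e (n - 1)) ∈ A (if (1 + 1) % 2 = 0 then 0 else n - 1)
                  norm_num
                  have h := (hew (n - 1) (by omega)).2
                  rwa [show (n - 1 + 1) % n = 0 from by
                    rw [Nat.sub_add_cancel (by omega), Nat.mod_self]] at h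
        · refine subwalk_contra hAinj heinj hew hmin (f := f) (j₀ := j)
            (by omega) (by omega) hn2 hfj hfA ?_
          intro i hi1 hi2
          exact hfecase i (by omega)
  have hD2 : 2 ≤ ((A (n - 1)) ∩ T (n - 1)).card := by
    have h1 : e (n - 2) ∈ A (n - 1) ∩ T (n - 1) := by
      refine Finset.mem_inter.mpr ⟨?_, ?_⟩
      · have h := heA (n - 2) (by omega)
        rwa [show n - 2 + 1 = n - 1 from by omega] at h
      · exact hTsub (n - 2) (n - 1) (by omega) ((hew (n - 2) (by omega)).1)
    have h2 : e (n - 1) ∈ A (n - 1) ∩ T (n - 1) := by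
      refine Finset.mem_inter.mpr ⟨(hew (n - 1) (by omega)).1, ?_⟩
      have h := (hew (n - 1) (by omega)).2
      rw [show (n - 1 + 1) % n = 0 from by
        rw [Nat.sub_add_cancel (by omega), Nat.mod_self]] at h
      exact hTsub 0 (n - 1) (by omega) h
    have hne : e (n - 2) ≠ e (n - 1) := fun h => by
      have := heinj (n - 2) (by omega) (n - 1) (by omega) h
      omega
    have hsub2 : ({e (n - 2), e (n - 1)} : Finset (Finset ℕ)) ⊆ A (n - 1) ∩ T (n - 1) := by
      intro x hx
      rcases Finset.mem_insert.mp hx with h | h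
      · exact h ▸ h1
      · exact (Finset.mem_singleton.mp h) ▸ h2
    calc 2 = ({e (n - 2), e (n - 1)} : Finset (Finset ℕ)).card := by
          rw [Finset.card_insert_of_notMem (by simpa using hne), Finset.card_singleton]
      _ ≤ _ := Finset.card_le_card hsub2
  have hstep : T n = T (n - 1) ∪ A (n - 1) := by
    have h := hTstep (n - 1)
    rwa [show n - 1 + 1 = n from by omega] at h
  have hfinal : ρ * (((verts (T n)).card : ℚ) - k) < ((T n).card : ℚ) - 1 := by
    rw [hstep]
    exact glue_lt (hind (n - 1) (by omega) (le_refl _)) (hAdens (n - 1) (by omega))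
      (key_lt (le_of_lt hρ) (hAdens (n - 1) (by omega)) (hbal (n - 1) (by omega)) hD2 hnsub)
  have hSS : S = T n := hS
  refine ⟨e 0, ?_, ?_⟩
  · rw [hSS]; exact hTsub 0 n (by omega) ((hew 0 (by omega)).1)
  · rw [hSS]
    have hvS : (k:ℚ) + 1 ≤ ((verts (T n)).card : ℚ) := by
      exact_mod_cast le_trans (hv 0 (by omega))
        (Finset.card_le_card (verts_mono (hTsub 0 n (by omega))))
    rw [lt_div_iff₀ (by linarith)]
    linarith
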